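/- Let c < d be real numbers and n ≥ 1. Let A be a monic real polynomial of degree n and B a monic real polynomial of degree n−1, such that all (real) roots of A and of B lie in the open interval (c,d) and both A and B split into linear factors over ℝ. Let γ be a nonzero real and set Q = A + γ·B. Assume Q = ∏_{i=1}^n (X − z_i) for real numbers z_1 ≤ z_2 ≤ … ≤ z_n with z_i ∈ (c,d) for all 2 ≤ i ≤ n. Then z_1 < c if and only if γ > −A(c)/B(c) > 0; in particular −A(c)/B(c) > 0 always holds. -/

import Mathlib

open Polynomial

lemma eval_left_sign_aux (p : Polynomial ℝ) (hm : p.Monic)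
    (hs : (p.map (RingHom.id ℝ)).Splits) (c : ℝ) (h : ∀ x ∈ p.roots, c < x) :
    ∃ P : ℝ, 0 < P ∧ p.eval c = (-1) ^ p.natDegree * P := by
  rw [map_id] at hs
  refine ⟨(p.roots.map (fun r => r - c)).prod, ?_, ?_⟩
  · apply Multiset.prod_pos
    intro a ha
    obtain ⟨r, hr, rfl⟩ := Multiset.mem_map.mp ha
    linarith [h r hr]
  · conv_lhs => rw [hs.eq_prod_roots_of_monic hm]
    rw [eval_multiset_prod, Multiset.map_map]
    have h1 : (Multiset.map (eval c ∘ fun a => X - C a) p.roots)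
        = (p.roots.map (fun r => r - c)).map Neg.neg := by
      rw [Multiset.map_map]
      apply Multiset.map_congr rfl
      intro r _
      simp [neg_sub]
    rw [h1, Multiset.prod_map_neg, Multiset.card_map,
      (splits_iff_card_roots).mp hs]

/-- the smallest zero of the quasi-Christoffel polynomial `Q = A + γB`
lies to the left of the interval of orthogonality `(c,d)` iff `γ > -A(c)/B(c) > 0`. -/
theorem quasiChristoffel_zero_left_of_interval
    (c d : ℝ) (hcd : c < d) (n : ℕ) (hn : 1 ≤ n)
    (A B : Polynomial ℝ)
    (hAmonic : A.Monic) (hAdeg : A.natDegree = n)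
    (hBmonic : B.Monic) (hBdeg : B.natDegree = n - 1)
    (hAsplit : (A.map (RingHom.id ℝ)).Splits) (hBsplit : (B.map (RingHom.id ℝ)).Splits)
    (hAroots : ∀ x ∈ A.roots, c < x ∧ x < d)
    (hBroots : ∀ x ∈ B.roots, c < x ∧ x < d)
    (γ : ℝ) (hγ : γ ≠ 0)
    (z : ℕ → ℝ)
    (hQ : A + Polynomial.C γ * B = ∏ i ∈ Finset.Icc 1 n, (X - Polynomial.C (z i)))
    (hmono : ∀ i j : ℕ, 1 ≤ i → i ≤ j → j ≤ n → z i ≤ z j)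
    (hzin : ∀ i : ℕ, 2 ≤ i → i ≤ n → c < z i ∧ z i < d) :
    (z 1 < c ↔ -A.eval c / B.eval c < γ) ∧ 0 < -A.eval c / B.eval c := by
  obtain ⟨Pa, hPa, hAe⟩ := eval_left_sign_aux A hAmonic hAsplit c (fun x hx => (hAroots x hx).1)
  obtain ⟨Pb, hPb, hBe⟩ := eval_left_sign_aux B hBmonic hBsplit c (fun x hx => (hBroots x hx).1)
  rw [hAdeg] at hAe
  rw [hBdeg] at hBe
  -- evaluate Q at c
  have hQc : A.eval c + γ * B.eval c = ∏ i ∈ Finset.Icc 1 n, (c - z i) := by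
    have := congrArg (eval c) hQ
    simpa [eval_prod] using this
  -- split off the i = 1 factor
  have hsplit1 : Finset.Icc 1 n = insert 1 (Finset.Icc 2 n) := by
    ext i; simp [Finset.mem_Icc, Finset.mem_insert]; omega
  have hnotmem : (1 : ℕ) ∉ Finset.Icc 2 n := by simp
  set Pz : ℝ := ∏ i ∈ Finset.Icc 2 n, (z i - c) with hPzdef
  have hPz : 0 < Pz := by
    apply Finset.prod_pos
    intro i hi
    rw [Finset.mem_Icc] at hi
    linarith [(hzin i hi.1 hi.2).1]
  have hcard : (Finset.Icc 2 n).card = n - 1 := by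
    rw [Nat.card_Icc]; omega
  have hrest : (∏ i ∈ Finset.Icc 2 n, (c - z i)) = (-1) ^ (n - 1) * Pz := by
    calc (∏ i ∈ Finset.Icc 2 n, (c - z i))
        = ∏ i ∈ Finset.Icc 2 n, ((-1) * (z i - c)) := by
          apply Finset.prod_congr rfl; intro i _; ring
      _ = (-1) ^ (n - 1) * Pz := by
          rw [Finset.prod_mul_distrib, Finset.prod_const, hcard]
  have hQc2 : A.eval c + γ * B.eval c = (c - z 1) * ((-1) ^ (n - 1) * Pz) := by
    rw [hQc, hsplit1, Finset.prod_insert hnotmem, hrest]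
  set e : ℝ := (-1) ^ (n - 1) with he
  have he2 : e * e = 1 := by
    rw [he, ← pow_add, ← two_mul, pow_mul]; norm_num
  have hen : (-1 : ℝ) ^ n = -e := by
    rw [he]
    conv_lhs => rw [show n = (n - 1) + 1 from by omega]
    rw [pow_succ]
    ring
  -- multiply hQc2 by e
  have key : γ * Pb - Pa = (c - z 1) * Pz := by
    have := congrArg (fun x => e * x) hQc2
    rw [hAe, hBe, hen] at this
    nlinarith [this, he2]
  have hratio : -A.eval c / B.eval c = Pa / Pb := by
    rw [hAe, hBe, hen]
    rw [show -(-e * Pa) = e * Pa by ring]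
    rw [mul_div_mul_left]
    intro h0
    rw [h0] at he2; simpa using he2
  rw [hratio]
  refine ⟨?_, div_pos hPa hPb⟩
  rw [div_lt_iff₀ hPb]
  constructor
  · intro h
    nlinarith [key]
  · intro h
    nlinarith [key]
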